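/- arXiv:1010.0654 — 5 statements merged into one kernel-verified Lean document; each statement's English description precedes it below -/
import Mathlib

section
/- Let M₁, M₂, W be finite nonempty sets, F : M₁ × M₂ → W, and p, q, u, v, w positive natural numbers. If F is computable over the Y-network with bit budgets ((p+q)·u, (p+q)·v, (p+q)·w), then the (p+q)-fold product function F^{(p+q)} : M₁^{p+q} × M₂^{p+q} → W^{p+q} is computable over the parallel double-Y network with bit budgets (q(p+q)u, p(p+q)u, q(p+q)v, p(p+q)v, q(p+q)w, p(p+q)w). (These double-Y budgets have per-link ratio Ã/A = B̃/B = C̃/C = p/q = α, so this realizes the paper's Lemma 1: the double-Y network with ã = αa, b̃ = αb, c̃ = αc can simulate, via time-sharing, any code for the Y-network Y((1+α)a, (1+α)b, (1+α)c).) -/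
/-- Packing a `k`-tuple of `r`-bit words into an `N`-bit word, `N = k * r`. -/
def packEquiv (r k N : ℕ) (h : N = k * r) :
    (Fin k → Fin (2 ^ r)) ≃ Fin (2 ^ N) :=
  finFunctionFinEquiv.trans (finCongr (by subst h; exact (pow_mul' 2 k r).symm))

/-- A function `F : M₁ × M₂ → W` is computable over the Y-network with bit
budgets `(R₁, R₂, R₃)`. -/
def YComputable {M₁ M₂ W : Type*} (F : M₁ × M₂ → W) (R₁ R₂ R₃ : ℕ) : Prop :=
  ∃ (g₁ : M₁ → Fin (2 ^ R₁)) (g₂ : M₂ → Fin (2 ^ R₂))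
    (φ : Fin (2 ^ R₁) × Fin (2 ^ R₂) → Fin (2 ^ R₃)) (Dec : Fin (2 ^ R₃) → W),
    ∀ m₁ m₂, Dec (φ (g₁ m₁, g₂ m₂)) = F (m₁, m₂)

/-- A function `F : M₁ × M₂ → W` is computable over the parallel double-Y
network with bit budgets `(A, A', B, B', C, C')`. -/
def DoubleYComputable {M₁ M₂ W : Type*} (F : M₁ × M₂ → W)
    (A A' B B' C C' : ℕ) : Prop :=
  ∃ (e₁ : M₁ → Fin (2 ^ A) × Fin (2 ^ A')) (e₂ : M₂ → Fin (2 ^ B) × Fin (2 ^ B'))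
    (φ₁ : Fin (2 ^ A) × Fin (2 ^ B) → Fin (2 ^ C))
    (φ₂ : Fin (2 ^ A') × Fin (2 ^ B') → Fin (2 ^ C'))
    (Dec : Fin (2 ^ C) × Fin (2 ^ C') → W),
    ∀ m₁ m₂, Dec (φ₁ ((e₁ m₁).1, (e₂ m₂).1), φ₂ ((e₁ m₁).2, (e₂ m₂).2)) = F (m₁, m₂)

/-- The `k`-fold product of `F`, acting componentwise. -/
def prodFun {M₁ M₂ W : Type*} (F : M₁ × M₂ → W) (k : ℕ) :
    (Fin k → M₁) × (Fin k → M₂) → (Fin k → W) :=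
  fun p i => F (p.1 i, p.2 i)

/-- Time-sharing (the paper's Lemma 1): if `F` is computable over the Y-network
`Y((p+q)u, (p+q)v, (p+q)w)`, then the `(p+q)`-fold product of `F` is computable
over the parallel double-Y network with budgets
`(q(p+q)u, p(p+q)u, q(p+q)v, p(p+q)v, q(p+q)w, p(p+q)w)`
(per-link ratio `p/q = α` on the second Y). -/
theorem Y_le_doubleY_timesharing {M₁ M₂ W : Type*} [Fintype M₁] [Nonempty M₁]
    [Fintype M₂] [Nonempty M₂] [Fintype W] [Nonempty W]
    (F : M₁ × M₂ → W) (p q u v w : ℕ)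
    (hp : 0 < p) (hq : 0 < q) (hu : 0 < u) (hv : 0 < v) (hw : 0 < w)
    (h : YComputable F ((p + q) * u) ((p + q) * v) ((p + q) * w)) :
    DoubleYComputable (prodFun F (p + q))
      (q * (p + q) * u) (p * (p + q) * u)
      (q * (p + q) * v) (p * (p + q) * v)
      (q * (p + q) * w) (p * (p + q) * w) := by

  obtain ⟨g₁, g₂, φ, Dec0, hdec⟩ := h
  let R₁ := (p + q) * u
  let R₂ := (p + q) * v
  let R₃ := (p + q) * w
  have hA : q * (p + q) * u = q * R₁ := by ring
  have hA' : p * (p + q) * u = p * R₁ := by ring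
  have hB : q * (p + q) * v = q * R₂ := by ring
  have hB' : p * (p + q) * v = p * R₂ := by ring
  have hC : q * (p + q) * w = q * R₃ := by ring
  have hC' : p * (p + q) * w = p * R₃ := by ring
  let PA := packEquiv R₁ q _ hA
  let PA' := packEquiv R₁ p _ hA'
  let PB := packEquiv R₂ q _ hB
  let PB' := packEquiv R₂ p _ hB'
  let PC := packEquiv R₃ q _ hC
  let PC' := packEquiv R₃ p _ hC'
  let ι : Fin p ⊕ Fin q ≃ Fin (p + q) := finSumFinEquiv
  refine ⟨fun m => (PA (fun j => g₁ (m (ι (Sum.inr j)))),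
                    PA' (fun j => g₁ (m (ι (Sum.inl j))))),
          fun m => (PB (fun j => g₂ (m (ι (Sum.inr j)))),
                    PB' (fun j => g₂ (m (ι (Sum.inl j))))),
          fun x => PC (fun j => φ ((PA.symm x.1) j, (PB.symm x.2) j)),
          fun x => PC' (fun j => φ ((PA'.symm x.1) j, (PB'.symm x.2) j)),
          fun x i => Sum.rec (fun j => Dec0 ((PC'.symm x.2) j))
                             (fun j => Dec0 ((PC.symm x.1) j)) (ι.symm i),
          ?_⟩
  intro m₁ m₂
  funext i
  simp only [Equiv.symm_apply_apply]
  rcases hι : ι.symm i with j | j <;>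
    have hi : i = ι (ι.symm i) := (ι.apply_symm_apply i).symm <;>
    rw [hι] at hi <;>
    simp only [hι, prodFun, hi] <;> exact hdec _ _
end

section
/- Let A, B, B', C, D be positive natural numbers satisfying B'·A + B·C ≤ (B + B')·D, and set k = B + B'. Then for every finite nonempty sets M₁, M₂, W and every function F : M₁ × M₂ → W that is computable over the Y-network with bit budgets (A, B + B', C), the k-fold product function F^{(k)} : M₁^k × M₂^k → W^k is computable over the two-relay cascade network with bit budgets (kA, kB, kB', kD, kC). (This is the lower-bounding direction of the paper's Lemma 2: with β = b'/(b+b'), the condition βa + (1−β)c ≤ d — equivalently b'a + bc ≤ (b+b')d — makes the cascade network of Fig. 4 equivalent to the Y-network Y(a, b + b', c).) -/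
/-- A function `F : M₁ × M₂ → W` is computable over the two-relay cascade
network with bit budgets `(A, B, B', D, C)` (topology: `x₁ → r₁` with `A` bits,
`x₂ → r₁` with `B` bits, `x₂ → r₂` with `B'` bits, `r₁ → r₂` with `D` bits,
`r₂ → sink` with `C` bits). -/
def CascadeComputable {M₁ M₂ W : Type*} (F : M₁ × M₂ → W)
    (A B B' D C : ℕ) : Prop :=
  ∃ (ea : M₁ → Fin (2 ^ A)) (eb : M₂ → Fin (2 ^ B)) (eb' : M₂ → Fin (2 ^ B'))
    (t : Fin (2 ^ A) × Fin (2 ^ B) → Fin (2 ^ D))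
    (ψ : Fin (2 ^ B') × Fin (2 ^ D) → Fin (2 ^ C))
    (Dec : Fin (2 ^ C) → W),
    ∀ m₁ m₂, Dec (ψ (eb' m₂, t (ea m₁, eb m₂))) = F (m₁, m₂)

/-- Pack a block of `m` symbols of `n` bits each into `r = m*n` bits. -/
def blockEquiv (m n r : ℕ) (h : r = m * n) :
    (Fin m → Fin (2 ^ n)) ≃ Fin (2 ^ r) :=
  finFunctionFinEquiv.trans (finCongr (by subst h; rw [← pow_mul, Nat.mul_comm]))

/-- The lower-bounding direction of the paper's Lemma 2: if
`B'·A + B·C ≤ (B + B')·D` (i.e. `βa + (1−β)c ≤ d` with `β = b'/(b+b')`), then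
any `F` computable over the Y-network `Y(A, B + B', C)` has its
`(B + B')`-fold product computable over the two-relay cascade network with the
budgets scaled up by `k = B + B'`. -/
theorem Y_le_cascade {M₁ M₂ W : Type*} [Fintype M₁] [Nonempty M₁]
    [Fintype M₂] [Nonempty M₂] [Fintype W] [Nonempty W]
    (A B B' C D : ℕ) (hA : 0 < A) (hB : 0 < B) (hB' : 0 < B') (hC : 0 < C)
    (hD : 0 < D) (hcond : B' * A + B * C ≤ (B + B') * D)
    (F : M₁ × M₂ → W) (h : YComputable F A (B + B') C) :
    CascadeComputable (prodFun F (B + B'))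
      ((B + B') * A) ((B + B') * B) ((B + B') * B') ((B + B') * D)
      ((B + B') * C) := by
  classical
  obtain ⟨g₁, g₂, φ, Dec, hdec⟩ := h
  -- block encoders
  set EA := blockEquiv (B + B') A ((B + B') * A) (by ring) with hEA
  set EB := blockEquiv B (B + B') ((B + B') * B) (by ring) with hEB
  set EB' := blockEquiv B' (B + B') ((B + B') * B') (by ring) with hEB'
  set EC := blockEquiv (B + B') C ((B + B') * C) (by ring) with hEC
  -- embedding of the relay-to-relay payload into the D-link alphabet
  obtain ⟨ι⟩ : Nonempty
      (((Fin B → Fin (2 ^ C)) × (Fin B' → Fin (2 ^ A))) ↪ Fin (2 ^ ((B + B') * D))) := by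
    rw [Function.Embedding.nonempty_iff_card_le]
    simp only [Fintype.card_prod, Fintype.card_fun, Fintype.card_fin]
    rw [← pow_mul, ← pow_mul, ← pow_add]
    exact Nat.pow_le_pow_right (by norm_num)
      (by calc C * B + A * B' = B' * A + B * C := by ring
            _ ≤ (B + B') * D := hcond)
  set ρ := Function.invFun ι with hρdef
  have hρ : ∀ p, ρ (ι p) = p := fun p => Function.leftInverse_invFun ι.injective p
  refine ⟨fun m₁ => EA (fun i => g₁ (m₁ i)),
    fun m₂ => EB (fun i => g₂ (m₂ (Fin.castAdd B' i))),
    fun m₂ => EB' (fun j => g₂ (m₂ (Fin.natAdd B j))),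
    fun au => ι (fun i => φ (EA.symm au.1 (Fin.castAdd B' i), EB.symm au.2 i),
                 fun j => EA.symm au.1 (Fin.natAdd B j)),
    fun vd => EC (fun i =>
      if h : (i : ℕ) < B then (ρ vd.2).1 ⟨i, h⟩
      else φ ((ρ vd.2).2 ⟨(i : ℕ) - B, by have := i.isLt; omega⟩,
              EB'.symm vd.1 ⟨(i : ℕ) - B, by have := i.isLt; omega⟩)),
    fun c i => Dec (EC.symm c i), ?_⟩
  intro m₁ m₂
  funext i
  simp only [Equiv.symm_apply_apply, hρ]
  by_cases hi : (i : ℕ) < B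
  · rw [dif_pos hi]
    have : Fin.castAdd B' (⟨(i : ℕ), hi⟩ : Fin B) = i := by
      apply Fin.ext; simp
    rw [this, hdec]
    rfl
  · rw [dif_neg hi]
    have : Fin.natAdd B (⟨(i : ℕ) - B, by have := i.isLt; omega⟩ : Fin B') = i := by
      apply Fin.ext; simp; omega
    rw [this, hdec]
    rfl
end

section
/- Let M₁, M₂, W be finite nonempty sets, F : M₁ × M₂ → W, k ≥ 1, and let A, C, B₀, …, B_k, D₁, …, D_k be natural numbers. If F is computable over the (k+1)-relay cascade network with bit budgets (A; B₀, …, B_k; D₁, …, D_k; C), then F is computable over the Y-network with bit budgets (A, B₀ + B₁ + ⋯ + B_k, C). (This is the upper-bounding direction of the paper's Lemma 3, obtained by merging all k+1 intermediate relay nodes of the network of Fig. 6 into one.) -/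
/-- The bit width of the signal entering relay `r_n` along the relay chain:
`A` bits enter `r₀` (from source `x₁`), and `D_n` bits enter `r_n` for
`n ≥ 1` (from relay `r_{n-1}`). -/
def chainState (A : ℕ) (D : ℕ → ℕ) : ℕ → ℕ
  | 0 => A
  | n + 1 => D (n + 1)

/-- Running the relay chain: relay `r_n` combines its incoming
`chainState A D n`-bit signal with the `B n`-bit signal from source `x₂`
(using the map `t n`) and forwards the result to `r_{n+1}`. -/
def chainRun (A : ℕ) (B D : ℕ → ℕ)
    (t : ∀ i : ℕ,
      Fin (2 ^ chainState A D i) × Fin (2 ^ B i) → Fin (2 ^ chainState A D (i + 1)))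
    (x : Fin (2 ^ A)) (y : ∀ j : ℕ, Fin (2 ^ B j)) :
    ∀ n : ℕ, Fin (2 ^ chainState A D n)
  | 0 => x
  | n + 1 => t n (chainRun A B D t x y n, y n)

/-- A function `F : M₁ × M₂ → W` is computable over the `(k+1)`-relay cascade
network with bit budgets `(A; B₀, …, B_k; D₁, …, D_k; C)` (topology:
`x₁ → r₀` with `A` bits; `x₂ → r_j` with `B j` bits for `j = 0, …, k`;
`r_{i-1} → r_i` with `D i` bits for `i = 1, …, k`; `r_k → sink` with `C`
bits). Only the values `B 0, …, B k` and `D 1, …, D k` are relevant. -/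
def MultiCascadeComputable {M₁ M₂ W : Type*} (F : M₁ × M₂ → W)
    (k A : ℕ) (B D : ℕ → ℕ) (C : ℕ) : Prop :=
  ∃ (ea : M₁ → Fin (2 ^ A)) (e : ∀ j : ℕ, M₂ → Fin (2 ^ B j))
    (t : ∀ i : ℕ,
      Fin (2 ^ chainState A D i) × Fin (2 ^ B i) → Fin (2 ^ chainState A D (i + 1)))
    (ψ : Fin (2 ^ chainState A D k) × Fin (2 ^ B k) → Fin (2 ^ C))
    (Dec : Fin (2 ^ C) → W),
    ∀ m₁ m₂,
      Dec (ψ (chainRun A B D t (ea m₁) (fun j => e j m₂) k, e k m₂)) = F (m₁, m₂)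


lemma chainRun_congr (A : ℕ) (B D : ℕ → ℕ)
    (t : ∀ i : ℕ,
      Fin (2 ^ chainState A D i) × Fin (2 ^ B i) → Fin (2 ^ chainState A D (i + 1)))
    (x : Fin (2 ^ A)) (y₁ y₂ : ∀ j : ℕ, Fin (2 ^ B j)) :
    ∀ n : ℕ, (∀ j < n, y₁ j = y₂ j) →
      chainRun A B D t x y₁ n = chainRun A B D t x y₂ n
  | 0, _ => rfl
  | n + 1, h => by
    simp only [chainRun, chainRun_congr A B D t x y₁ y₂ n (fun j hj => h j (Nat.lt_succ_of_lt hj)),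
      h n (Nat.lt_succ_self n)]

/-- The upper-bounding direction of the paper's Lemma 3: merging all `k+1`
relay nodes of the cascade of Fig. 6 into one shows that computability over
the `(k+1)`-relay cascade implies computability over the Y-network
`Y(A, B₀ + ⋯ + B_k, C)`. -/
theorem multiCascade_le_Y {M₁ M₂ W : Type*} [Fintype M₁] [Nonempty M₁]
    [Fintype M₂] [Nonempty M₂] [Fintype W] [Nonempty W]
    (F : M₁ × M₂ → W) (k : ℕ) (hk : 1 ≤ k) (A C : ℕ) (B D : ℕ → ℕ)
    (h : MultiCascadeComputable F k A B D C) :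
    YComputable F A (∑ j ∈ Finset.range (k + 1), B j) C := by
  obtain ⟨ea, e, t, ψ, Dec, hF⟩ := h
  have hcard : Fintype.card (∀ j : Fin (k + 1), Fin (2 ^ B j.val)) =
      2 ^ (∑ j ∈ Finset.range (k + 1), B j) := by
    simp [Fintype.card_pi, Finset.prod_pow_eq_pow_sum, ← Fin.prod_univ_eq_prod_range, Fin.sum_univ_eq_sum_range]
  let E := Fintype.equivFinOfCardEq hcard
  refine ⟨ea, fun m₂ => E (fun j => e j.val m₂),
    fun p => ψ (chainRun A B D t p.1
      (fun j => if hj : j < k + 1 then E.symm p.2 ⟨j, hj⟩ else ⟨0, Nat.two_pow_pos _⟩) k,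
      ((fun j => if hj : j < k + 1 then E.symm p.2 ⟨j, hj⟩ else ⟨0, Nat.two_pow_pos _⟩) : ∀ j : ℕ, Fin (2 ^ B j)) k),
    Dec, fun m₁ m₂ => ?_⟩
  simp only [Equiv.symm_apply_apply]
  rw [chainRun_congr A B D t (ea m₁) _ (fun j => e j m₂) k
    (fun j hj => by simp [Nat.lt_succ_of_lt hj])]
  simpa using hF m₁ m₂
end

section
/- Let k ≥ 1 and let A, C, B₀, …, B_k, D₁, …, D_k be positive natural numbers, and set S = B₀ + B₁ + ⋯ + B_k. Suppose that for every i ∈ {1, …, k}: C·(B₀ + ⋯ + B_{i−1}) + A·(B_i + ⋯ + B_k) ≤ S·D_i. Then for every finite nonempty sets M₁, M₂, W and every function F : M₁ × M₂ → W that is computable over the Y-network with bit budgets (A, S, C), the S-fold product function F^{(S)} : M₁^S × M₂^S → W^S is computable over the (k+1)-relay cascade network with bit budgets (S·A; S·B₀, …, S·B_k; S·D₁, …, S·D_k; S·C). (This is the lower-bounding direction of the paper's Lemma 3: with α_j = b_j/b₀, a₁ = a/(Σα_j) and c₁ = c/(Σα_j), the conditions Σ_{j<i} α_j c₁ + Σ_{j≥i}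 α_j a₁ ≤ d_i make the network of Fig. 6 equivalent to the Y-network Y(a, Σb_i, c).) -/
namespace YCasc

variable (k A C : ℕ) (B D : ℕ → ℕ)

/-- total block sum -/
abbrev S : ℕ := ∑ j ∈ Finset.range (k + 1), B j

noncomputable def eqv : (Σ j : Fin (k + 1), Fin (B j)) ≃ Fin (S k B) :=
  Fintype.equivOfCardEq (by simp [Fin.sum_univ_eq_sum_range])

/-- relay assignment of instance `i` -/
noncomputable def r (i : Fin (S k B)) : Fin (k + 1) := ((eqv k B).symm i).1

/-- width of the slot for instance `i` on the link entering relay `n` -/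
noncomputable def w (n : ℕ) (i : Fin (S k B)) : ℕ :=
  if (r k B i : ℕ) < n then C else A

/-- ideal message type entering relay `n` -/
noncomputable abbrev T (n : ℕ) := ∀ i : Fin (S k B), Fin (2 ^ w k A C B n i)

instance (m : ℕ) : Nonempty (Fin (2 ^ m)) := ⟨⟨0, Nat.two_pow_pos m⟩⟩

lemma card_T (n : ℕ) :
    Fintype.card (T k A C B n) = 2 ^ ∑ i, w k A C B n i := by
  simp [Fintype.card_pi, Finset.prod_pow_eq_pow_sum]

lemma sum_w (n : ℕ) :
    ∑ i, w k A C B n i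
      = ∑ j ∈ Finset.range (k + 1), B j * (if j < n then C else A) := by
  rw [← Equiv.sum_comp (eqv k B) (w k A C B n), ← Finset.univ_sigma_univ, Finset.sum_sigma]
  have h1 : ∀ p : Σ j : Fin (k + 1), Fin (B j),
      w k A C B n (eqv k B p) = if (p.1 : ℕ) < n then C else A := by
    intro p
    simp [w, r, Equiv.symm_apply_apply]
  calc ∑ j : Fin (k+1), ∑ b : Fin (B j), w k A C B n (eqv k B ⟨j, b⟩)
      = ∑ j : Fin (k+1), ∑ _b : Fin (B j), (if (j : ℕ) < n then C else A) := by
        refine Finset.sum_congr rfl fun j _ => Finset.sum_congr rfl fun b _ => h1 ⟨j, b⟩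
    _ = ∑ j : Fin (k+1), B j * (if (j : ℕ) < n then C else A) := by
        simp [Finset.sum_const, mul_comm]
    _ = _ := Fin.sum_univ_eq_sum_range (fun j => B j * if j < n then C else A) (k+1)


/-- incoming width on the real chain -/
noncomputable abbrev cw (n : ℕ) : ℕ :=
  chainState (S k B * A) (fun i => S k B * D i) n

lemma sum_w_zero : ∑ i, w k A C B 0 i = S k B * A := by
  rw [sum_w]
  simp [Finset.sum_mul]

lemma sum_w_le (hcond : ∀ i, 1 ≤ i → i ≤ k →
      C * (∑ j ∈ Finset.range i, B j) + A * (∑ j ∈ Finset.Icc i k, B j) ≤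
        S k B * D i) (n : ℕ) (h1 : 1 ≤ n) (h2 : n ≤ k) :
    ∑ i, w k A C B n i ≤ S k B * D n := by
  rw [sum_w]
  have hsplit : ∑ j ∈ Finset.range (k + 1), B j * (if j < n then C else A)
      = C * (∑ j ∈ Finset.range n, B j) + A * (∑ j ∈ Finset.Icc n k, B j) := by
    rw [Finset.range_eq_Ico, ← Finset.sum_Ico_consecutive _ (Nat.zero_le n) (by omega)]
    rw [← Finset.range_eq_Ico, Finset.Ico_add_one_right_eq_Icc]
    congr 1
    · rw [Finset.mul_sum]
      refine Finset.sum_congr rfl fun j hj => ?_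
      rw [Finset.mem_range] at hj
      rw [if_pos hj, mul_comm]
    · rw [Finset.mul_sum]
      refine Finset.sum_congr rfl fun j hj => ?_
      rw [Finset.mem_Icc] at hj
      rw [if_neg (by omega), mul_comm]
  rw [hsplit]
  exact hcond n h1 h2

lemma card_T_le (hcond : ∀ i, 1 ≤ i → i ≤ k →
      C * (∑ j ∈ Finset.range i, B j) + A * (∑ j ∈ Finset.Icc i k, B j) ≤
        S k B * D i) (n : ℕ) (hn : n ≤ k) :
    Fintype.card (T k A C B n) ≤ 2 ^ cw k A B D n := by
  rw [card_T]
  refine Nat.pow_le_pow_right (by norm_num) ?_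
  match n with
  | 0 => rw [sum_w_zero]; exact Nat.le_of_eq rfl
  | (m+1) => exact sum_w_le k A C B D hcond (m+1) (by omega) hn

/-- encoder for the ideal state into the real chain alphabet -/
noncomputable def ιe (n : ℕ) (h : Fintype.card (T k A C B n) ≤ 2 ^ cw k A B D n) :
    T k A C B n ↪ Fin (2 ^ cw k A B D n) :=
  Classical.choice (Function.Embedding.nonempty_of_card_le (by simpa using h))

noncomputable def ι (n : ℕ) : T k A C B n → Fin (2 ^ cw k A B D n) :=
  if h : Fintype.card (T k A C B n) ≤ 2 ^ cw k A B D n then ιe k A C B D n h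
  else fun _ => ⟨0, Nat.two_pow_pos _⟩

noncomputable def de (n : ℕ) : Fin (2 ^ cw k A B D n) → T k A C B n :=
  Function.invFun (ι k A C B D n)

lemma de_ι (n : ℕ) (h : Fintype.card (T k A C B n) ≤ 2 ^ cw k A B D n)
    (s : T k A C B n) : de k A C B D n (ι k A C B D n s) = s := by
  have hinj : Function.Injective (ι k A C B D n) := by
    rw [ι, dif_pos h]
    exact (ιe k A C B D n h).injective
  exact Function.leftInverse_invFun hinj s

/-- encoder for a relay's side information -/
noncomputable def εE (j : ℕ) :
    (Fin (B j) → Fin (2 ^ S k B)) ≃ Fin (2 ^ (S k B * B j)) :=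
  Fintype.equivOfCardEq (by simp [pow_mul])

/-- encoder for the final link -/
noncomputable def εC : (Fin (S k B) → Fin (2 ^ C)) ≃ Fin (2 ^ (S k B * C)) :=
  Fintype.equivOfCardEq (by simp [pow_mul, mul_comm])


section Protocol

variable {M₁ M₂ W : Type*}
variable (g₁ : M₁ → Fin (2 ^ A)) (g₂ : M₂ → Fin (2 ^ S k B))
variable (φ : Fin (2 ^ A) × Fin (2 ^ S k B) → Fin (2 ^ C))

lemma wA_eq {n : ℕ} {i : Fin (S k B)} (h : (r k B i : ℕ) = n) :
    2 ^ w k A C B n i = 2 ^ A := by simp [w, h]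

lemma wC_eq {n : ℕ} {i : Fin (S k B)} (h : (r k B i : ℕ) = n) :
    (2 : ℕ) ^ C = 2 ^ w k A C B (n + 1) i := by simp [w, h]

lemma wE_eq {n : ℕ} {i : Fin (S k B)} (h : (r k B i : ℕ) ≠ n) :
    2 ^ w k A C B n i = 2 ^ w k A C B (n + 1) i := by
  have : ((r k B i : ℕ) < n) ↔ ((r k B i : ℕ) < n + 1) := by omega
  simp [w, this]

lemma wA0_eq {n : ℕ} {i : Fin (S k B)} (h : ¬ (r k B i : ℕ) < n) :
    (2 : ℕ) ^ A = 2 ^ w k A C B n i := by simp [w, h]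

lemma wC0_eq {n : ℕ} {i : Fin (S k B)} (h : (r k B i : ℕ) < n) :
    (2 : ℕ) ^ C = 2 ^ w k A C B n i := by simp [w, h]

lemma sigma_mk_eq (n : ℕ) (hn : n < k + 1) (p : Σ j : Fin (k + 1), Fin (B j))
    (h : (p.1 : ℕ) = n) :
    (⟨⟨n, hn⟩, Fin.cast (congrArg B h) p.2⟩ : Σ j : Fin (k + 1), Fin (B j)) = p := by
  obtain ⟨j, b⟩ := p
  simp only at h
  subst h
  rfl

/-- the ideal relay operation -/
noncomputable def step (n : ℕ) (s : T k A C B n) (g : Fin (B n) → Fin (2 ^ S k B)) :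
    T k A C B (n + 1) := fun i =>
  if h : (r k B i : ℕ) = n then
    Fin.cast (wC_eq k A C B h)
      (φ (Fin.cast (wA_eq k A C B h) (s i),
          g (Fin.cast (congrArg B h) (((eqv k B).symm i).2))))
  else Fin.cast (wE_eq k A C B h) (s i)

/-- the ideal state entering relay `n` on inputs `m₁ m₂` -/
noncomputable def σ (n : ℕ) (m₁ : Fin (S k B) → M₁) (m₂ : Fin (S k B) → M₂) :
    T k A C B n := fun i =>
  if h : (r k B i : ℕ) < n then
    Fin.cast (wC0_eq k A C B h) (φ (g₁ (m₁ i), g₂ (m₂ i)))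
  else Fin.cast (wA0_eq k A C B h) (g₁ (m₁ i))

/-- the side information relay `n` receives -/
noncomputable def gv (n : ℕ) (hn : n < k + 1) (m₂ : Fin (S k B) → M₂) :
    Fin (B n) → Fin (2 ^ S k B) := fun b => g₂ (m₂ (eqv k B ⟨⟨n, hn⟩, b⟩))

lemma step_σ (n : ℕ) (hn : n < k + 1) (m₁ : Fin (S k B) → M₁)
    (m₂ : Fin (S k B) → M₂) :
    step k A C B φ n (σ k A C B g₁ g₂ φ n m₁ m₂) (gv k B g₂ n hn m₂)
      = σ k A C B g₁ g₂ φ (n + 1) m₁ m₂ := by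
  funext i
  by_cases h : (r k B i : ℕ) = n
  · rw [step, σ, σ]
    rw [dif_pos h, dif_neg (by omega), dif_pos (by omega)]
    have h1 : Fin.cast (wA_eq k A C B h)
        (Fin.cast (wA0_eq k A C B (by omega)) (g₁ (m₁ i))) = g₁ (m₁ i) :=
      Fin.ext rfl
    have h2 : gv k B g₂ n hn m₂
        (Fin.cast (congrArg B h) (((eqv k B).symm i).2)) = g₂ (m₂ i) := by
      rw [gv]
      congr 1
      exact (congrArg (fun p => m₂ (eqv k B p)) (sigma_mk_eq k B n hn ((eqv k B).symm i) h)).trans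
        (congrArg m₂ ((eqv k B).apply_symm_apply i))
    rw [h1, h2]
  · rw [step, σ, σ, dif_neg h]
    by_cases h2 : (r k B i : ℕ) < n
    · rw [dif_pos h2, dif_pos (by omega)]
      exact Fin.ext rfl
    · rw [dif_neg h2, dif_neg (by omega)]
      exact Fin.ext rfl


lemma wF_eq {i : Fin (S k B)} (h : (r k B i : ℕ) ≠ k) :
    2 ^ w k A C B k i = 2 ^ C := by
  have : (r k B i : ℕ) < k := by
    have := (r k B i).isLt; omega
  simp [w, this]

/-- the final relay's operation -/
noncomputable def finalMap (s : T k A C B k) (g : Fin (B k) → Fin (2 ^ S k B)) :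
    Fin (S k B) → Fin (2 ^ C) := fun i =>
  if h : (r k B i : ℕ) = k then
    φ (Fin.cast (wA_eq k A C B h) (s i),
       g (Fin.cast (congrArg B h) (((eqv k B).symm i).2)))
  else Fin.cast (wF_eq k A C B h) (s i)

lemma finalMap_σ (m₁ : Fin (S k B) → M₁) (m₂ : Fin (S k B) → M₂) :
    finalMap k A C B φ (σ k A C B g₁ g₂ φ k m₁ m₂) (gv k B g₂ k (by omega) m₂)
      = fun i => φ (g₁ (m₁ i), g₂ (m₂ i)) := by
  funext i
  by_cases h : (r k B i : ℕ) = k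
  · rw [finalMap, σ, dif_pos h, dif_neg (by omega)]
    have h1 : Fin.cast (wA_eq k A C B h)
        (Fin.cast (wA0_eq k A C B (by omega)) (g₁ (m₁ i))) = g₁ (m₁ i) :=
      Fin.ext rfl
    have h2 : gv k B g₂ k (by omega) m₂
        (Fin.cast (congrArg B h) (((eqv k B).symm i).2)) = g₂ (m₂ i) := by
      rw [gv]
      congr 1
      exact (congrArg (fun p => m₂ (eqv k B p)) (sigma_mk_eq k B k (by omega) ((eqv k B).symm i) h)).trans
        (congrArg m₂ ((eqv k B).apply_symm_apply i))
    rw [h1, h2]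
  · have hlt : (r k B i : ℕ) < k := by have := (r k B i).isLt; omega
    rw [finalMap, σ, dif_neg h, dif_pos hlt]
    exact Fin.ext rfl

/-- initial encoding at source `x₁` -/
noncomputable def ea [Nonempty M₂] (m₁ : Fin (S k B) → M₁) : Fin (2 ^ cw k A B D 0) :=
  ι k A C B D 0 (σ k A C B g₁ g₂ φ 0 m₁ (Classical.arbitrary _))

/-- encoding at source `x₂` for relay `j` -/
noncomputable def ee (j : ℕ) (m₂ : Fin (S k B) → M₂) : Fin (2 ^ (S k B * B j)) :=
  if hj : j < k + 1 then εE k B j (gv k B g₂ j hj m₂)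
  else ⟨0, Nat.two_pow_pos _⟩

/-- the real relay maps -/
noncomputable def tmap (i : ℕ) :
    Fin (2 ^ cw k A B D i) × Fin (2 ^ (S k B * B i)) → Fin (2 ^ cw k A B D (i + 1)) :=
  if hik : i < k then
    fun xy => ι k A C B D (i + 1)
      (step k A C B φ i (de k A C B D i xy.1) ((εE k B i).symm xy.2))
  else fun _ => ⟨0, Nat.two_pow_pos _⟩

/-- the final relay's real map -/
noncomputable def ψm (xy : Fin (2 ^ cw k A B D k) × Fin (2 ^ (S k B * B k))) :
    Fin (2 ^ (S k B * C)) :=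
  εC k C B (finalMap k A C B φ (de k A C B D k xy.1) ((εE k B k).symm xy.2))

lemma σ_zero [Nonempty M₂] (m₁ : Fin (S k B) → M₁) (m₂ : Fin (S k B) → M₂) :
    σ k A C B g₁ g₂ φ 0 m₁ m₂ = σ k A C B g₁ g₂ φ 0 m₁ (Classical.arbitrary _) := by
  funext i
  rw [σ, σ, dif_neg (by omega), dif_neg (by omega)]

lemma run_eq [Nonempty M₂]
    (hcond : ∀ i, 1 ≤ i → i ≤ k →
      C * (∑ j ∈ Finset.range i, B j) + A * (∑ j ∈ Finset.Icc i k, B j) ≤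
        S k B * D i)
    (m₁ : Fin (S k B) → M₁) (m₂ : Fin (S k B) → M₂) (n : ℕ) (hn : n ≤ k) :
      chainRun (S k B * A) (fun j => S k B * B j) (fun i => S k B * D i)
        (tmap k A C B D φ) (ea k A C B D g₁ g₂ φ m₁)
        (fun j => ee k B g₂ j m₂) n
      = ι k A C B D n (σ k A C B g₁ g₂ φ n m₁ m₂) := by
  induction n with
  | zero =>
      show ea k A C B D g₁ g₂ φ m₁ = _
      rw [ea, σ_zero k A C B g₁ g₂ φ m₁ m₂]
  | succ n ih =>
      show tmap k A C B D φ n (chainRun (S k B * A) (fun j => S k B * B j) (fun i => S k B * D i)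
          (tmap k A C B D φ) (ea k A C B D g₁ g₂ φ m₁) (fun j => ee k B g₂ j m₂) n,
          ee k B g₂ n m₂) = _
      rw [ih (by omega), tmap, dif_pos (by omega : n < k)]
      simp only
      rw [de_ι k A C B D n (card_T_le k A C B D hcond n (by omega)),
        ee, dif_pos (by omega : n < k + 1), Equiv.symm_apply_apply,
        step_σ k A C B g₁ g₂ φ n (by omega) m₁ m₂]

theorem main [Nonempty M₂]
    (hcond : ∀ i, 1 ≤ i → i ≤ k →
      C * (∑ j ∈ Finset.range i, B j) + A * (∑ j ∈ Finset.Icc i k, B j) ≤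
        S k B * D i)
    (F : M₁ × M₂ → W) (Dec : Fin (2 ^ C) → W)
    (hY : ∀ m₁ m₂, Dec (φ (g₁ m₁, g₂ m₂)) = F (m₁, m₂)) :
    MultiCascadeComputable (prodFun F (S k B)) k (S k B * A)
      (fun j => S k B * B j) (fun i => S k B * D i) (S k B * C) := by
  refine ⟨ea k A C B D g₁ g₂ φ, fun j => ee k B g₂ j, tmap k A C B D φ,
    ψm k A C B D φ, fun z => fun i => Dec ((εC k C B).symm z i), ?_⟩
  intro m₁ m₂
  rw [run_eq k A C B D g₁ g₂ φ hcond m₁ m₂ k le_rfl, ψm]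
  simp only
  rw [de_ι k A C B D k (card_T_le k A C B D hcond k le_rfl),
    ee, dif_pos (by omega : k < k + 1)]
  simp only [Equiv.symm_apply_apply]
  rw [finalMap_σ k A C B g₁ g₂ φ m₁ m₂]
  funext i
  exact hY (m₁ i) (m₂ i)

end Protocol

end YCasc

/-- The lower-bounding direction of the paper's Lemma 3: if for every
`i ∈ {1, …, k}` we have
`C·(B₀ + ⋯ + B_{i−1}) + A·(B_i + ⋯ + B_k) ≤ S·D_i` where
`S = B₀ + ⋯ + B_k`, then any `F` computable over the Y-network `Y(A, S, C)`
has its `S`-fold product computable over the `(k+1)`-relay cascade network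
with all budgets scaled up by `S`. -/
theorem Y_le_multiCascade {M₁ M₂ W : Type*} [Fintype M₁] [Nonempty M₁]
    [Fintype M₂] [Nonempty M₂] [Fintype W] [Nonempty W]
    (k : ℕ) (hk : 1 ≤ k) (A C : ℕ) (B D : ℕ → ℕ)
    (hA : 0 < A) (hC : 0 < C) (hB : ∀ j ≤ k, 0 < B j)
    (hD : ∀ i, 1 ≤ i → i ≤ k → 0 < D i)
    (hcond : ∀ i, 1 ≤ i → i ≤ k →
      C * (∑ j ∈ Finset.range i, B j) + A * (∑ j ∈ Finset.Icc i k, B j) ≤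
        (∑ j ∈ Finset.range (k + 1), B j) * D i)
    (F : M₁ × M₂ → W)
    (h : YComputable F A (∑ j ∈ Finset.range (k + 1), B j) C) :
    MultiCascadeComputable (prodFun F (∑ j ∈ Finset.range (k + 1), B j))
      k ((∑ j ∈ Finset.range (k + 1), B j) * A)
      (fun j => (∑ j ∈ Finset.range (k + 1), B j) * B j)
      (fun i => (∑ j ∈ Finset.range (k + 1), B j) * D i)
      ((∑ j ∈ Finset.range (k + 1), B j) * C) := by
  obtain ⟨g₁, g₂, φ, Dec, hY⟩ := h
  exact YCasc.main k A C B D g₁ g₂ φ hcond F Dec hY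
end

section
/- Let S be a finite nonempty index set, n a positive natural number, R : S → ℝ with R s ≥ 0 for all s, and ε ≥ 0. For each s ∈ S let X_s be a finite nonempty set with |X_s| ≤ 2^{n·R s}. Let M₀ be a nonempty subset of ∏_{s∈S} X_s with |M₀| ≥ 2^{n·(Σ_{s∈S} R s − ε)}, and let U = (U_s)_{s∈S} be a random vector, defined on a probability space, whose distribution is uniform on M₀. Then for every subset A ⊆ S, the Shannon entropy of the marginal (U_s)_{s∈A} satisfies H[(U_s)_{s∈A}] ≥ n·(Σ_{s∈A} R s − ε)·log 2, where H denotes Shannon entropy with natural logarithm. (This is the key entropy estimate in the paper's proof of its Theorem: a uniform distribution on a large bin M₀ of message vectors yields a deterministic broadcast channel input whose marginal entropies dominate the rate point n(R − ε·1).) -/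
open MeasureTheory
open scoped Classical

/-- The Shannon entropy (with natural logarithm) of a random variable `U`
taking values in a finite type: `H[U] = −∑ₓ P(U = x) log P(U = x)`. -/
noncomputable def shannonEntropy {Ω α : Type*} [Fintype α] [MeasurableSpace Ω]
    (μ : Measure Ω) (U : Ω → α) : ℝ :=
  ∑ x : α, Real.negMulLog ((μ (U ⁻¹' {x})).toReal)

/-- The key entropy estimate in the paper's proof of its Theorem: if `U` is
uniformly distributed on a set `M₀` of message vectors with
`|M₀| ≥ 2^{n(∑_s R_s − ε)}`, where the alphabet of source `s` has size at most
`2^{n R_s}`, then for every subset `A` of sources the marginal `(U_s)_{s∈A}`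
satisfies `H[(U_s)_{s∈A}] ≥ n(∑_{s∈A} R_s − ε) log 2`. -/
theorem marginal_entropy_of_uniform_on_bin
    {S : Type*} [Fintype S] [Nonempty S] (n : ℕ) (hn : 0 < n)
    (R : S → ℝ) (hR : ∀ s, 0 ≤ R s) (ε : ℝ) (hε : 0 ≤ ε)
    (X : S → Type*) [∀ s, Fintype (X s)] [∀ s, Nonempty (X s)]
    (hX : ∀ s, (Fintype.card (X s) : ℝ) ≤ 2 ^ ((n : ℝ) * R s))
    (M₀ : Finset (∀ s, X s)) (hM₀ : M₀.Nonempty)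
    (hcard : (2 : ℝ) ^ ((n : ℝ) * ((∑ s, R s) - ε)) ≤ (M₀.card : ℝ))
    {Ω : Type*} [MeasurableSpace Ω] (μ : Measure Ω) [IsProbabilityMeasure μ]
    (U : Ω → ∀ s, X s)
    (hunif : ∀ m : ∀ s, X s,
      μ (U ⁻¹' {m}) = if m ∈ M₀ then ((M₀.card : ENNReal))⁻¹ else 0) :
    ∀ A : Finset S,
      (n : ℝ) * ((∑ s ∈ A, R s) - ε) * Real.log 2 ≤
        shannonEntropy μ (fun ω (s : A) => U ω s.1) := by
  intro A
  classical
  set f : (∀ s, X s) → ((s : A) → X s.1) := fun m s => m s.1 with hf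
  set M : ℕ := M₀.card with hMdef
  have hMpos : 0 < M := Finset.card_pos.mpr hM₀
  have hMR : (0:ℝ) < (M : ℝ) := by exact_mod_cast hMpos
  set N : ((s : A) → X s.1) → ℕ := fun y => (M₀.filter fun m => f m = y).card with hN
  have hNsum : ∑ y, N y = M := by
    simpa using (Finset.card_eq_sum_card_fiberwise (f := f) (t := Finset.univ)
      (fun m _ => Finset.mem_univ _)).symm
  set V : Ω → ((s : A) → X s.1) := fun ω (s : A) => U ω s.1 with hV
  have hq_le : ∀ y, μ (V ⁻¹' {y}) ≤ (N y : ENNReal) * (M : ENNReal)⁻¹ := by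
    intro y
    have hsub : (V ⁻¹' {y}) ⊆
        ⋃ m ∈ Finset.univ.filter (fun m => f m = y), U ⁻¹' {m} := by
      intro ω hω
      simp only [hV, Set.mem_preimage, Set.mem_singleton_iff] at hω
      exact Set.mem_biUnion (Finset.mem_filter.mpr ⟨Finset.mem_univ _, hω⟩) rfl
    calc μ (V ⁻¹' {y}) ≤ μ (⋃ m ∈ Finset.univ.filter (fun m => f m = y), U ⁻¹' {m}) :=
          measure_mono hsub
      _ ≤ ∑ m ∈ Finset.univ.filter (fun m => f m = y), μ (U ⁻¹' {m}) :=
          measure_biUnion_finset_le _ _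
      _ = ∑ m ∈ Finset.univ.filter (fun m => f m = y),
            (if m ∈ M₀ then ((M : ENNReal))⁻¹ else 0) := by
          refine Finset.sum_congr rfl fun m _ => ?_
          rw [hunif m]
      _ = ∑ m ∈ (Finset.univ.filter (fun m => f m = y)) ∩ M₀, ((M : ENNReal))⁻¹ := by
          rw [Finset.sum_ite_mem]
      _ = (N y : ENNReal) * (M : ENNReal)⁻¹ := by
          have : (Finset.univ.filter (fun m => f m = y)) ∩ M₀
              = M₀.filter fun m => f m = y := by
            ext m; simp [Finset.mem_filter, Finset.mem_inter, and_comm]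
          rw [this, Finset.sum_const, hN, nsmul_eq_mul]
  have hone_le : (1 : ENNReal) ≤ ∑ y, μ (V ⁻¹' {y}) := by
    have hsub : (Set.univ : Set Ω) ⊆ ⋃ y ∈ (Finset.univ : Finset ((s : A) → X s.1)),
        V ⁻¹' {y} := by
      intro ω _
      exact Set.mem_biUnion (Finset.mem_univ (V ω)) rfl
    calc (1 : ENNReal) = μ Set.univ := (measure_univ).symm
      _ ≤ μ (⋃ y ∈ (Finset.univ : Finset ((s : A) → X s.1)), V ⁻¹' {y}) := measure_mono hsub
      _ ≤ ∑ y, μ (V ⁻¹' {y}) := measure_biUnion_finset_le _ _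
  set p : ((s : A) → X s.1) → ℝ := fun y => (μ (V ⁻¹' {y})).toReal with hp
  have hp_le : ∀ y, p y ≤ (N y : ℝ) / (M : ℝ) := by
    intro y
    have h1 : ((N y : ENNReal) * (M : ENNReal)⁻¹).toReal = (N y : ℝ) / (M : ℝ) := by
      rw [ENNReal.toReal_mul, ENNReal.toReal_inv]
      simp [div_eq_mul_inv]
    rw [hp, ← h1]
    exact ENNReal.toReal_mono (by
      apply ENNReal.mul_ne_top (ENNReal.natCast_ne_top _)
      simp [ENNReal.inv_ne_top]
      exact_mod_cast hMpos.ne') (hq_le y)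
  have hsumNM : ∑ y, (N y : ℝ) / (M : ℝ) = 1 := by
    rw [← Finset.sum_div]
    rw [show ∑ y, (N y : ℝ) = (M : ℝ) by exact_mod_cast congrArg (Nat.cast : ℕ → ℝ) hNsum]
    field_simp
  have hp_sum_ge : (1 : ℝ) ≤ ∑ y, p y := by
    have hfin : ∀ y ∈ (Finset.univ : Finset ((s : A) → X s.1)), μ (V ⁻¹' {y}) ≠ ⊤ :=
      fun y _ => measure_ne_top μ _
    have := ENNReal.toReal_mono (a := 1) (b := ∑ y, μ (V ⁻¹' {y}))
      (by
        rw [ENNReal.sum_ne_top]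
        exact fun y _ => measure_ne_top μ _) hone_le
    rwa [ENNReal.toReal_one, ENNReal.toReal_sum hfin] at this
  have hp_eq : ∀ y, p y = (N y : ℝ) / (M : ℝ) := by
    have hsum_eq : ∑ y, p y = ∑ y, (N y : ℝ) / (M : ℝ) := by
      have h1 : ∑ y, p y ≤ ∑ y, (N y : ℝ) / (M : ℝ) :=
        Finset.sum_le_sum fun y _ => hp_le y
      rw [hsumNM] at h1 ⊢
      linarith
    intro y
    exact (Finset.sum_eq_sum_iff_of_le (fun y _ => hp_le y)).mp hsum_eq y (Finset.mem_univ y)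
  -- the entropy as a sum over fibers
  have hent : shannonEntropy μ V = ∑ y, Real.negMulLog ((N y : ℝ) / (M : ℝ)) := by
    unfold shannonEntropy
    exact Finset.sum_congr rfl fun y _ => by rw [← hp_eq y]
  -- the bound on fiber sizes
  set K : ℕ := ∏ s ∈ Aᶜ, Fintype.card (X s) with hK
  have hKpos : 0 < K := Finset.prod_pos fun s _ => Fintype.card_pos
  have hNK : ∀ y, N y ≤ K := by
    intro y
    have : K = Fintype.card ((s : (Aᶜ : Finset S)) → X s.1) := by
      rw [Fintype.card_pi, hK, ← Finset.prod_coe_sort]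
    rw [this, ← Finset.card_univ]
    apply Finset.card_le_card_of_injOn (fun m (s : (Aᶜ : Finset S)) => m s.1)
      (fun m _ => Finset.mem_univ _)
    intro m₁ hm₁ m₂ hm₂ hgm
    simp only [Finset.mem_coe, Finset.mem_filter] at hm₁ hm₂
    funext s
    by_cases hs : s ∈ A
    · have h1 := congrFun hm₁.2 ⟨s, hs⟩
      have h2 := congrFun hm₂.2 ⟨s, hs⟩
      simp only [hf] at h1 h2
      rw [h1, h2]
    · exact congrFun hgm ⟨s, Finset.mem_compl.mpr hs⟩
  -- per-term lower bound
  have hterm : ∀ y, (N y : ℝ) / (M : ℝ) * (Real.log M - Real.log K) ≤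
      Real.negMulLog ((N y : ℝ) / (M : ℝ)) := by
    intro y
    rcases Nat.eq_zero_or_pos (N y) with h0 | hpos
    · simp [h0]
    · have hNpos : (0:ℝ) < (N y : ℝ) := by exact_mod_cast hpos
      have hlogNK : Real.log (N y) ≤ Real.log K :=
        Real.log_le_log hNpos (by exact_mod_cast hNK y)
      have : Real.negMulLog ((N y : ℝ) / (M : ℝ)) =
          (N y : ℝ) / (M : ℝ) * (Real.log M - Real.log (N y)) := by
        rw [Real.negMulLog, Real.log_div hNpos.ne' hMR.ne']
        ring
      rw [this]
      have hdiv : (0:ℝ) ≤ (N y : ℝ) / (M : ℝ) := by positivity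
      nlinarith
  -- summing up
  have hsum_bound : Real.log M - Real.log K ≤ shannonEntropy μ V := by
    rw [hent]
    calc Real.log M - Real.log K
        = ∑ y, (N y : ℝ) / (M : ℝ) * (Real.log M - Real.log K) := by
          rw [← Finset.sum_mul, hsumNM, one_mul]
      _ ≤ ∑ y, Real.negMulLog ((N y : ℝ) / (M : ℝ)) :=
          Finset.sum_le_sum fun y _ => hterm y
  -- bounding log M and log K
  have hlog2 : (0:ℝ) < Real.log 2 := Real.log_pos (by norm_num)
  have hlogM : (n : ℝ) * ((∑ s, R s) - ε) * Real.log 2 ≤ Real.log M := by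
    have := Real.log_le_log (Real.rpow_pos_of_pos (by norm_num) _) hcard
    rwa [Real.log_rpow (by norm_num)] at this
  have hlogK : Real.log K ≤ (∑ s ∈ Aᶜ, (n : ℝ) * R s) * Real.log 2 := by
    have hKcast : (K : ℝ) = ∏ s ∈ Aᶜ, (Fintype.card (X s) : ℝ) := by
      rw [hK]; push_cast; ring
    rw [hKcast, Real.log_prod (fun s _ => by
      have := Fintype.card_pos (α := X s); positivity)]
    rw [Finset.sum_mul]
    refine Finset.sum_le_sum fun s _ => ?_
    have h1 : Real.log (Fintype.card (X s)) ≤ Real.log ((2:ℝ) ^ ((n : ℝ) * R s)) :=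
      Real.log_le_log (by exact_mod_cast Fintype.card_pos (α := X s)) (hX s)
    rwa [Real.log_rpow (by norm_num)] at h1
  have hsplit : (∑ s ∈ A, R s) + ∑ s ∈ Aᶜ, R s = ∑ s, R s :=
    Finset.sum_add_sum_compl A R
  have hfinal : (n : ℝ) * ((∑ s ∈ A, R s) - ε) * Real.log 2 ≤
      Real.log M - Real.log K := by
    have hAc : (∑ s ∈ Aᶜ, (n : ℝ) * R s) = (n : ℝ) * ∑ s ∈ Aᶜ, R s := by
      rw [← Finset.mul_sum]
    have heq : (n : ℝ) * ((∑ s, R s) - ε) * Real.log 2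
        = (n : ℝ) * ((∑ s ∈ A, R s) - ε) * Real.log 2
          + ((n : ℝ) * ∑ s ∈ Aᶜ, R s) * Real.log 2 := by
      rw [← hsplit]; ring
    rw [hAc] at hlogK
    linarith
  exact le_trans hfinal hsum_bound
end
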